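/- Let m > 1 be an even integer. The polynomial ψ_m(u) = 2^φ(m)·∏_{1≤r<m, gcd(r,m)=1}(u - cos(rπ/m)) has rational coefficients and is irreducible over ℚ. -/

import Mathlib

open Polynomial
open scoped IntermediateField


set_option maxHeartbeats 1000000 in
theorem stmt_12 (m : ℕ) (hm : 1 < m) (heven : Even m) :
    ∃ p : Polynomial ℚ, Irreducible p ∧
      p.map (algebraMap ℚ ℂ) =
        C ((2 : ℂ) ^ m.totient) *
          ∏ r ∈ (Finset.Ico 1 m).filter (fun r => r.Coprime m),
            (X - C (Complex.cos ((r : ℂ) * Real.pi / (m : ℂ)))) := by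
  classical
  have hmpos : (0:ℝ) < m := by exact_mod_cast (by omega : 0 < m)
  have hm0 : (m : ℝ) ≠ 0 := ne_of_gt hmpos
  have hm0' : (m : ℂ) ≠ 0 := Nat.cast_ne_zero.mpr (by omega)
  set S := (Finset.Ico 1 m).filter (fun r => r.Coprime m) with hS
  set β : ℕ → ℂ := fun r => Complex.cos ((r : ℂ) * Real.pi / (m : ℂ)) with hβ
  have h2m : 2 * m ≠ 0 := by omega
  have h2mpos : 0 < 2 * m := by omega
  have h2dvd : 2 ∣ m := heven.two_dvd
  set ζ : ℂ := Complex.exp (2 * Real.pi * Complex.I / (2 * m : ℕ)) with hζdef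
  have hζ : IsPrimitiveRoot ζ (2 * m) := Complex.isPrimitiveRoot_exp _ h2m
  have hζpow : ∀ r : ℕ, ζ ^ r = Complex.exp ((((r : ℝ) * Real.pi / m : ℝ) : ℂ) * Complex.I) := by
    intro r
    rw [hζdef, ← Complex.exp_nat_mul]
    congr 1
    push_cast
    field_simp
  have hβeq : ∀ r : ℕ, β r = (ζ ^ r + (ζ ^ r)⁻¹) / 2 := by
    intro r
    rw [hζpow, ← Complex.exp_neg, hβ]
    simp only [Complex.cos]
    have harg : ((r : ℂ) * (Real.pi:ℝ) / (m : ℂ)) = (((r : ℝ) * Real.pi / m : ℝ) : ℂ) := by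
      push_cast; ring
    rw [harg, neg_mul]
  -- ζ is integral
  have hζint : IsIntegral ℚ ζ := by
    refine ⟨X ^ (2*m) - C 1, monic_X_pow_sub_C 1 h2m, ?_⟩
    simp [hζ.pow_eq_one]
  set K := ℚ⟮ζ⟯ with hK
  haveI : FiniteDimensional ℚ K := IntermediateField.adjoin.finiteDimensional hζint
  have hζK : ζ ∈ K := IntermediateField.mem_adjoin_simple_self ℚ ζ
  set α : ℂ := (ζ + ζ⁻¹) / 2 with hα
  have hαβ : β 1 = α := by rw [hβeq 1, pow_one]
  have h2K : (2:ℂ) ∈ K := by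
    have := K.algebraMap_mem (2:ℚ)
    norm_num at this
    simpa using K.algebraMap_mem (2:ℚ)
  have hαK : α ∈ K := div_mem (add_mem hζK (inv_mem hζK)) h2K
  set α' : K := ⟨α, hαK⟩ with hα'
  have hα'int : IsIntegral ℚ α' := IsIntegral.of_finite ℚ α'
  set q := minpoly ℚ α' with hq
  have hqmonic : q.Monic := minpoly.monic hα'int
  -- every β r (r ∈ S) is a root of q mapped to ℂ
  have hroot : ∀ r ∈ S, (q.map (algebraMap ℚ ℂ)).eval (β r) = 0 := by
    intro r hr
    simp only [hS, Finset.mem_filter, Finset.mem_Ico] at hr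
    obtain ⟨⟨hr1, hrm⟩, hcop⟩ := hr
    have hcop2 : r.Coprime 2 := Nat.Coprime.coprime_dvd_right h2dvd hcop
    have hcop2m : r.Coprime (2 * m) := Nat.Coprime.mul_right hcop2 hcop
    have hy : (Polynomial.aeval (ζ ^ r)) (minpoly ℚ (IntermediateField.AdjoinSimple.gen ℚ ζ)) = 0 := by
      erw [IntermediateField.minpoly_gen, ← Polynomial.cyclotomic_eq_minpoly_rat hζ h2mpos]
      have := (hζ.pow_of_coprime r hcop2m).isRoot_cyclotomic h2mpos
      simpa [Polynomial.aeval_def, Polynomial.eval₂_eq_eval_map, Polynomial.map_cyclotomic]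
        using this
    have hy' : (Polynomial.aeval (ζ ^ r)) (minpoly ℚ (IntermediateField.adjoin.powerBasis hζint).gen) = 0 := by
      rwa [IntermediateField.adjoin.powerBasis_gen]
    set σ : K →ₐ[ℚ] ℂ := (IntermediateField.adjoin.powerBasis hζint).lift (ζ ^ r) hy' with hσ
    have hσgen : σ (IntermediateField.AdjoinSimple.gen ℚ ζ) = ζ ^ r := by
      rw [← IntermediateField.adjoin.powerBasis_gen hζint]
      exact PowerBasis.lift_gen _ _ _
    have hζr0 : ζ ^ r ≠ 0 := by rw [hζpow]; exact Complex.exp_ne_zero _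
    have hσα : σ α' = β r := by
      have h2 : (algebraMap ℚ K 2) * α' = IntermediateField.AdjoinSimple.gen ℚ ζ
          + (IntermediateField.AdjoinSimple.gen ℚ ζ)⁻¹ := by
        apply Subtype.coe_injective
        have hcoe : ((algebraMap ℚ K 2 : K) : ℂ) = 2 := by
          exact map_ofNat (algebraMap ℚ ℂ) 2
        push_cast [IntermediateField.coe_inv, hcoe]
        show (2:ℂ) * α = ζ + ζ⁻¹
        rw [hα]; ring
      have h3 := congrArg σ h2
      rw [map_mul, map_add, map_inv₀, hσgen, AlgHom.commutes] at h3
      have h3' : (2:ℂ) * σ α' = ζ ^ r + (ζ ^ r)⁻¹ := by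
        rw [← h3]; norm_num
      rw [hβeq, ← h3']
      ring
    have h4 : Polynomial.aeval (σ α') q = 0 := by
      rw [Polynomial.aeval_algHom_apply, minpoly.aeval, map_zero]
    rw [← hσα]
    rwa [Polynomial.aeval_def, Polynomial.eval₂_eq_eval_map] at h4
  -- degree bound
  have hd_dvd : q.natDegree ∣ Module.finrank ℚ K := minpoly.degree_dvd hα'int
  have hKrank : Module.finrank ℚ K = 2 * m.totient := by
    rw [IntermediateField.adjoin.finrank hζint, ← Polynomial.cyclotomic_eq_minpoly_rat hζ h2mpos,
      Polynomial.natDegree_cyclotomic, Nat.totient_mul_of_prime_of_dvd Nat.prime_two h2dvd]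
  have hφpos : 0 < m.totient := Nat.totient_pos.mpr (by omega)
  have hζim : ζ.im = Real.sin (Real.pi / m) := by
    have h1 := hζpow 1
    rw [pow_one] at h1
    rw [h1, Complex.exp_ofReal_mul_I_im, Nat.cast_one, one_mul]
  have hζim_pos : 0 < ζ.im := by
    rw [hζim]
    apply Real.sin_pos_of_pos_of_lt_pi
    · positivity
    · exact div_lt_self Real.pi_pos (by exact_mod_cast hm)
  have hle : q.natDegree ≤ m.totient := by
    by_contra hgt
    push_neg at hgt
    obtain ⟨k, hk⟩ := hd_dvd
    rw [hKrank] at hk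
    have hk1 : k = 1 := by
      rcases k with _ | _ | k
      · omega
      · rfl
      · exfalso; nlinarith
    subst hk1
    have hdeq : q.natDegree = 2 * m.totient := by omega
    have hαint : IsIntegral ℚ α := by
      have hh : α = algebraMap K ℂ α' := rfl
      rw [hh]
      exact hα'int.map (IsScalarTower.toAlgHom ℚ K ℂ)
    have hq_eq : minpoly ℚ α = q := by
      have hh : α = algebraMap K ℂ α' := rfl
      rw [hh, minpoly.algebraMap_eq (algebraMap K ℂ).injective]
    have hLK : ℚ⟮α⟯ ≤ K := by
      rw [IntermediateField.adjoin_le_iff]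
      intro x hx
      rw [Set.mem_singleton_iff.mp hx]
      exact hαK
    have hEq : ℚ⟮α⟯ = K := by
      refine IntermediateField.eq_of_le_of_finrank_eq hLK ?_
      rw [IntermediateField.adjoin.finrank hαint, hq_eq, hKrank, hdeq]
    have hζL : ζ ∈ ℚ⟮α⟯ := hEq ▸ hζK
    have hRle : ℚ⟮α⟯ ≤ Subfield.toIntermediateField (K := ℚ) Complex.ofRealHom.fieldRange
        (fun x => ⟨(x : ℝ), by simp⟩) := by
      rw [IntermediateField.adjoin_le_iff]
      intro x hx
      rw [Set.mem_singleton_iff.mp hx]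
      have hh : α = ((Real.cos (Real.pi / m) : ℝ) : ℂ) := by
        rw [← hαβ]
        simp only [hβ]
        rw [Complex.ofReal_cos]
        congr 1
        push_cast
        ring
      exact ⟨Real.cos (Real.pi / m), hh.symm⟩
    obtain ⟨y, hy⟩ := hRle hζL
    have him : ζ.im = 0 := by rw [← hy]; simp
    linarith
  -- the product
  set Q : Polynomial ℂ := ∏ r ∈ S, (X - C (β r)) with hQdef
  have hQmonic : Q.Monic := monic_prod_of_monic _ _ (fun r _ => monic_X_sub_C _)
  have hQdeg : Q.natDegree = S.card := by
    rw [hQdef, Polynomial.natDegree_prod_of_monic _ _ (fun r _ => monic_X_sub_C _)]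
    simp
  have hcard : S.card = m.totient := by
    rw [hS, Nat.totient]
    congr 1
    ext x
    simp only [Finset.mem_filter, Finset.mem_Ico, Finset.mem_range]
    constructor
    · rintro ⟨⟨h1, h2⟩, h3⟩
      exact ⟨h2, Nat.coprime_comm.mp h3⟩
    · rintro ⟨h1, h2⟩
      refine ⟨⟨?_, h1⟩, Nat.coprime_comm.mp h2⟩
      rcases Nat.eq_zero_or_pos x with rfl | h
      · rw [Nat.coprime_zero_right] at h2; omega
      · exact h
  have hinj : ∀ r ∈ S, ∀ s ∈ S, β r = β s → r = s := by
    intro r hr s hs hrs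
    simp only [hS, Finset.mem_filter, Finset.mem_Ico] at hr hs
    have hmem : ∀ t : ℕ, t < m → (t : ℝ) * Real.pi / m ∈ Set.Icc 0 Real.pi := by
      intro t ht
      constructor
      · positivity
      · rw [div_le_iff₀ hmpos]
        have h1 : (t : ℝ) ≤ m := by exact_mod_cast ht.le
        nlinarith [Real.pi_pos]
    have hcast : ∀ t : ℕ, β t = ((Real.cos ((t : ℝ) * Real.pi / m) : ℝ) : ℂ) := by
      intro t
      simp only [hβ]
      rw [Complex.ofReal_cos]
      congr 1
      push_cast
      ring
    have hre : Real.cos ((r : ℝ) * Real.pi / m) = Real.cos ((s : ℝ) * Real.pi / m) := by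
      have := hrs
      rw [hcast r, hcast s] at this
      exact_mod_cast this
    have harg := Real.injOn_cos (hmem r hr.1.2) (hmem s hs.1.2) hre
    field_simp at harg
    exact_mod_cast harg
  have hmapmonic : (q.map (algebraMap ℚ ℂ)).Monic := hqmonic.map _
  have hmapne : q.map (algebraMap ℚ ℂ) ≠ 0 := hmapmonic.ne_zero
  have hmap : q.map (algebraMap ℚ ℂ) = Q := by
    have hMnodup : (S.val.map β).Nodup :=
      Multiset.Nodup.map_on (fun r hr s hs => hinj r hr s hs) S.nodup
    have hsub : (S.val.map β) ⊆ (q.map (algebraMap ℚ ℂ)).roots := by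
      intro a ha
      obtain ⟨r, hr, rfl⟩ := Multiset.mem_map.mp ha
      rw [Polynomial.mem_roots hmapne]
      exact hroot r hr
    have hle2 : (S.val.map β) ≤ (q.map (algebraMap ℚ ℂ)).roots :=
      (Multiset.le_iff_subset hMnodup).mpr hsub
    have hdvd2 : Q ∣ q.map (algebraMap ℚ ℂ) := by
      have h1 : Q = ((S.val.map β).map (fun a => X - C a)).prod := by
        rw [hQdef, Finset.prod_eq_multiset_prod, Multiset.map_map]
        rfl
      rw [h1]
      exact (Multiset.prod_dvd_prod_of_le (Multiset.map_le_map hle2)).trans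
        (Polynomial.prod_multiset_X_sub_C_dvd _)
    obtain ⟨t, ht⟩ := hdvd2
    have hQne : Q ≠ 0 := hQmonic.ne_zero
    have htne : t ≠ 0 := by rintro rfl; rw [mul_zero] at ht; exact hmapne ht
    have hdeg2 : (q.map (algebraMap ℚ ℂ)).natDegree = q.natDegree :=
      Polynomial.natDegree_map _
    have hdegs : q.natDegree = Q.natDegree + t.natDegree := by
      rw [← hdeg2, ht, Polynomial.natDegree_mul hQne htne]
    have hdegt : t.natDegree = 0 := by
      rw [hQdeg, hcard] at hdegs
      omega
    have hlct : t.leadingCoeff = 1 := by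
      have h2 : Q.leadingCoeff * t.leadingCoeff = 1 := by
        rw [← Polynomial.leadingCoeff_mul, ← ht]
        exact hmapmonic
      rwa [hQmonic.leadingCoeff, one_mul] at h2
    have ht1 : t = 1 := by
      rw [Polynomial.eq_C_of_natDegree_eq_zero hdegt]
      rw [Polynomial.leadingCoeff, hdegt] at hlct
      rw [hlct, map_one]
    rw [ht, ht1, mul_one]
  refine ⟨C ((2:ℚ) ^ m.totient) * q, ?_, ?_⟩
  · have hirr := minpoly.irreducible hα'int
    have hc : ((2:ℚ) ^ m.totient) ≠ 0 := by positivity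
    have hu : IsUnit (C ((2:ℚ) ^ m.totient)) := isUnit_C.mpr hc.isUnit
    exact Associated.irreducible ⟨hu.unit, by rw [IsUnit.unit_spec, mul_comm]⟩ hirr
  · rw [Polynomial.map_mul, Polynomial.map_C, hmap]
    congr 2
    norm_num
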